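/- Let H, Ĥ be symmetric positive semidefinite n×n matrices with decreasing eigenvalues λ_1 ≥ … ≥ λ_n and λ̂_1 ≥ … ≥ λ̂_n respectively, and let Û_r be a matrix whose orthonormal columns are eigenvectors of Ĥ for its r largest eigenvalues. Then tr(H) − tr(Û_rᵀ H Û_r) ≤ Σ_{j=r+1}^{n} λ_j + 2r ‖H − Ĥ‖_op. -/

import Mathlib

open Matrix
open scoped Matrix

/-- The operator (spectral) norm of a real square matrix. -/
noncomputable def matOpNorm {n : ℕ} (A : Matrix (Fin n) (Fin n) ℝ) : ℝ :=
  ‖Matrix.toEuclideanCLM (𝕜 := ℝ) A‖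

lemma conjEntry {n r : ℕ} (M : Matrix (Fin n) (Fin n) ℝ) (U : Matrix (Fin n) (Fin r) ℝ)
    (i : Fin r) : (Uᵀ * M * U) i i = (fun a => U a i) ⬝ᵥ M *ᵥ (fun a => U a i) := by
  simp only [Matrix.mul_apply, Matrix.transpose_apply, dotProduct, Matrix.mulVec, dotProduct,
    Finset.sum_mul, Finset.mul_sum]
  rw [Finset.sum_comm]
  congr 1; ext a; congr 1; ext b; ring

lemma quadForm_abs_le {n : ℕ} (A : Matrix (Fin n) (Fin n) ℝ) (x : Fin n → ℝ)
    (hx : ∑ i, x i * x i = 1) : |x ⬝ᵥ A *ᵥ x| ≤ matOpNorm A := by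
  set v : EuclideanSpace ℝ (Fin n) := (WithLp.equiv 2 _).symm x with hv
  have hnv : ‖v‖ = 1 := by
    rw [EuclideanSpace.norm_eq]
    simp only [hv, WithLp.equiv_symm_apply, PiLp.toLp_apply, Real.norm_eq_abs, pow_two, abs_mul_abs_self]
    rw [hx, Real.sqrt_one]
  have h1 : (inner ℝ v (Matrix.toEuclideanCLM (𝕜 := ℝ) A v) : ℝ) = x ⬝ᵥ A *ᵥ x := by
    rw [hv, WithLp.equiv_symm_apply, Matrix.toEuclideanCLM_toLp]
    simp only [PiLp.inner_apply, PiLp.toLp_apply, RCLike.inner_apply, conj_trivial,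
      dotProduct, Matrix.toLin'_apply, mul_comm]
  calc |x ⬝ᵥ A *ᵥ x| = |(inner ℝ v (Matrix.toEuclideanCLM (𝕜 := ℝ) A v) : ℝ)| := by rw [h1]
    _ ≤ ‖v‖ * ‖Matrix.toEuclideanCLM (𝕜 := ℝ) A v‖ := abs_real_inner_le_norm _ _
    _ ≤ ‖v‖ * (‖Matrix.toEuclideanCLM (𝕜 := ℝ) A‖ * ‖v‖) := by
        gcongr; exact ContinuousLinearMap.le_opNorm _ _
    _ = matOpNorm A := by rw [hnv, matOpNorm]; ring

lemma trace_conj_abs_le {n r : ℕ} (E : Matrix (Fin n) (Fin n) ℝ)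
    (U : Matrix (Fin n) (Fin r) ℝ) (hU : Uᵀ * U = 1) :
    |(Uᵀ * E * U).trace| ≤ r * matOpNorm E := by
  have hcol : ∀ i : Fin r, ∑ a, U a i * U a i = 1 := by
    intro i
    have := congrFun (congrFun hU i) i
    simpa [Matrix.mul_apply, Matrix.one_apply] using this
  rw [Matrix.trace]
  calc |∑ i, (Uᵀ * E * U).diag i| ≤ ∑ i : Fin r, |(Uᵀ * E * U) i i| :=
        Finset.abs_sum_le_sum_abs _ _
    _ ≤ ∑ _i : Fin r, matOpNorm E := by
        refine Finset.sum_le_sum fun i _ => ?_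
        rw [conjEntry]
        exact quadForm_abs_le E _ (hcol i)
    _ = r * matOpNorm E := by simp [mul_comm]

lemma sum_castLE {n r : ℕ} (hr : r ≤ n) (f : Fin n → ℝ) :
    ∑ i : Fin r, f (Fin.castLE hr i)
      = ∑ j ∈ Finset.univ.filter (fun j : Fin n => (j : ℕ) < r), f j := by
  have hset : Finset.univ.filter (fun j : Fin n => (j : ℕ) < r)
      = Finset.univ.map ⟨Fin.castLE hr, Fin.castLE_injective hr⟩ := by
    ext j
    simp only [Finset.mem_filter, Finset.mem_univ, true_and, Finset.mem_map,
      Function.Embedding.coeFn_mk]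
    constructor
    · intro hj; exact ⟨⟨j, hj⟩, rfl⟩
    · rintro ⟨i, rfl⟩; exact i.isLt
  rw [hset, Finset.sum_map]
  rfl

lemma conj_eig {n r : ℕ} (hr : r ≤ n) (lam : Fin n → ℝ) (V : Matrix (Fin n) (Fin n) ℝ)
    (hV : Vᵀ * V = 1) :
    (V.submatrix id (Fin.castLE hr))ᵀ * (V * Matrix.diagonal lam * Vᵀ)
        * (V.submatrix id (Fin.castLE hr))
      = Matrix.diagonal (fun i => lam (Fin.castLE hr i)) := by
  have hsub : V.submatrix id (Fin.castLE hr)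
      = V * (1 : Matrix (Fin n) (Fin n) ℝ).submatrix id (Fin.castLE hr) := by
    have := Matrix.mul_submatrix_one (Equiv.refl (Fin n)) (Fin.castLE hr) V
    simpa using this.symm
  have hleft : ∀ M : Matrix (Fin n) (Fin n) ℝ,
      (1 : Matrix (Fin n) (Fin n) ℝ).submatrix (Fin.castLE hr) id * M
        = M.submatrix (Fin.castLE hr) id := by
    intro M
    have := Matrix.one_submatrix_mul (Fin.castLE hr) (Equiv.refl (Fin n)) M
    simpa using this
  have hright : ∀ M : Matrix (Fin r) (Fin n) ℝ,
      M * (1 : Matrix (Fin n) (Fin n) ℝ).submatrix id (Fin.castLE hr)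
        = M.submatrix id (Fin.castLE hr) := by
    intro M
    have := Matrix.mul_submatrix_one (Equiv.refl (Fin n)) (Fin.castLE hr) M
    simpa using this
  have h2 : ((1 : Matrix (Fin n) (Fin n) ℝ).submatrix id (Fin.castLE hr))ᵀ
      = (1 : Matrix (Fin n) (Fin n) ℝ).submatrix (Fin.castLE hr) id := by
    rw [Matrix.transpose_submatrix, Matrix.transpose_one]
  rw [hsub, Matrix.transpose_mul, h2]
  have hmid : (1 : Matrix (Fin n) (Fin n) ℝ).submatrix (Fin.castLE hr) id * Vᵀ
      * (V * Matrix.diagonal lam * Vᵀ)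
      * (V * (1 : Matrix (Fin n) (Fin n) ℝ).submatrix id (Fin.castLE hr))
      = (1 : Matrix (Fin n) (Fin n) ℝ).submatrix (Fin.castLE hr) id * Matrix.diagonal lam
        * (1 : Matrix (Fin n) (Fin n) ℝ).submatrix id (Fin.castLE hr) := by
    calc (1 : Matrix (Fin n) (Fin n) ℝ).submatrix (Fin.castLE hr) id * Vᵀ
        * (V * Matrix.diagonal lam * Vᵀ)
        * (V * (1 : Matrix (Fin n) (Fin n) ℝ).submatrix id (Fin.castLE hr))
        = (1 : Matrix (Fin n) (Fin n) ℝ).submatrix (Fin.castLE hr) id * ((Vᵀ * V)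
          * (Matrix.diagonal lam
          * ((Vᵀ * V) * (1 : Matrix (Fin n) (Fin n) ℝ).submatrix id (Fin.castLE hr)))) := by
          simp only [Matrix.mul_assoc]
      _ = _ := by rw [hV, Matrix.one_mul, Matrix.one_mul, Matrix.mul_assoc]
  rw [hmid, hleft, hright, Matrix.submatrix_submatrix, Function.comp_id, Function.id_comp]
  rw [Matrix.submatrix_diagonal _ _ (Fin.castLE_injective hr)]
  rfl

lemma sub_orthonormal {n r : ℕ} (hr : r ≤ n) (V : Matrix (Fin n) (Fin n) ℝ)
    (hV : Vᵀ * V = 1) :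
    (V.submatrix id (Fin.castLE hr))ᵀ * (V.submatrix id (Fin.castLE hr)) = 1 := by
  ext i i'
  have h := congrFun (congrFun hV (Fin.castLE hr i)) (Fin.castLE hr i')
  simp only [Matrix.mul_apply, Matrix.transpose_apply, Matrix.one_apply,
    Matrix.submatrix_apply, id] at h ⊢
  rw [h]
  simp [(Fin.castLE_injective hr).eq_iff]

lemma lam_eq_quad {n : ℕ} (lam : Fin n → ℝ) (V : Matrix (Fin n) (Fin n) ℝ)
    (hV : Vᵀ * V = 1) (M : Matrix (Fin n) (Fin n) ℝ)
    (hM : M = V * Matrix.diagonal lam * Vᵀ) (j : Fin n) :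
    lam j = (fun a => V a j) ⬝ᵥ M *ᵥ (fun a => V a j) := by
  have hD : Vᵀ * M * V = Matrix.diagonal lam := by
    rw [hM]
    calc Vᵀ * (V * Matrix.diagonal lam * Vᵀ) * V
        = (Vᵀ * V) * Matrix.diagonal lam * (Vᵀ * V) := by simp only [Matrix.mul_assoc]
      _ = Matrix.diagonal lam := by rw [hV]; simp
  have := conjEntry M V j
  rw [← this, hD, Matrix.diagonal_apply_eq]

lemma kyFan {n r : ℕ} (hr : r ≤ n) (lamhat : Fin n → ℝ) (hlamhat : Antitone lamhat)
    (hpos : ∀ j, 0 ≤ lamhat j) (Vhat : Matrix (Fin n) (Fin n) ℝ)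
    (hVhat : Vhatᵀ * Vhat = 1) (U : Matrix (Fin n) (Fin r) ℝ) (hU : Uᵀ * U = 1) :
    (Uᵀ * (Vhat * Matrix.diagonal lamhat * Vhatᵀ) * U).trace
      ≤ ∑ j ∈ Finset.univ.filter (fun j : Fin n => (j : ℕ) < r), lamhat j := by
  set W : Matrix (Fin n) (Fin r) ℝ := Vhatᵀ * U with hWdef
  have hVV : Vhat * Vhatᵀ = 1 := mul_eq_one_comm.mp hVhat
  have hWW : Wᵀ * W = 1 := by
    rw [hWdef, Matrix.transpose_mul, Matrix.transpose_transpose]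
    calc Uᵀ * Vhat * (Vhatᵀ * U) = Uᵀ * (Vhat * Vhatᵀ) * U := by
          simp only [Matrix.mul_assoc]
      _ = 1 := by rw [hVV, Matrix.mul_one, hU]
  have hform : Uᵀ * (Vhat * Matrix.diagonal lamhat * Vhatᵀ) * U
      = Wᵀ * Matrix.diagonal lamhat * W := by
    rw [hWdef, Matrix.transpose_mul, Matrix.transpose_transpose]
    simp only [Matrix.mul_assoc]
  set s : Fin n → ℝ := fun j => ∑ i, W j i * W j i with hsdef
  have hs0 : ∀ j, 0 ≤ s j := fun j => Finset.sum_nonneg fun i _ => mul_self_nonneg _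
  have entry : ∀ i : Fin r, (Wᵀ * Matrix.diagonal lamhat * W) i i
      = ∑ j, lamhat j * (W j i * W j i) := by
    intro i
    rw [Matrix.mul_assoc]
    simp only [Matrix.mul_apply, Matrix.transpose_apply, Matrix.diagonal_apply, ite_mul,
      zero_mul, Finset.sum_ite_eq, Finset.mem_univ, if_true]
    exact Finset.sum_congr rfl fun j _ => by ring
  have strace : (Wᵀ * Matrix.diagonal lamhat * W).trace = ∑ j, lamhat j * s j := by
    rw [Matrix.trace]
    calc ∑ i, (Wᵀ * Matrix.diagonal lamhat * W).diag i
        = ∑ i : Fin r, ∑ j, lamhat j * (W j i * W j i) := by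
          exact Finset.sum_congr rfl fun i _ => entry i
      _ = ∑ j, ∑ i : Fin r, lamhat j * (W j i * W j i) := Finset.sum_comm
      _ = ∑ j, lamhat j * s j := by
          exact Finset.sum_congr rfl fun j _ => by rw [hsdef, Finset.mul_sum]
  have hsum : ∑ j, s j = (r : ℝ) := by
    rw [hsdef]
    calc ∑ j, ∑ i, W j i * W j i = ∑ i : Fin r, ∑ j, W j i * W j i := Finset.sum_comm
      _ = ∑ i : Fin r, (1 : ℝ) := by
          refine Finset.sum_congr rfl fun i _ => ?_
          have := congrFun (congrFun hWW i) i
          simpa [Matrix.mul_apply, Matrix.one_apply] using this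
      _ = (r : ℝ) := by simp
  have hs1 : ∀ j, s j ≤ 1 := by
    intro j
    set P : Matrix (Fin n) (Fin n) ℝ := W * Wᵀ with hPdef
    have hPP : P * P = P := by
      rw [hPdef]
      calc W * Wᵀ * (W * Wᵀ) = W * (Wᵀ * W) * Wᵀ := by simp only [Matrix.mul_assoc]
        _ = W * Wᵀ := by rw [hWW, Matrix.mul_one]
    have hPjj : P j j = s j := by
      simp [hPdef, Matrix.mul_apply, hsdef]
    have hsq : s j * s j ≤ s j := by
      have h1 : s j = ∑ k, P j k * P j k := by
        conv_lhs => rw [← hPjj, ← hPP]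
        rw [Matrix.mul_apply]
        refine Finset.sum_congr rfl fun k _ => ?_
        congr 1
        simp [hPdef, Matrix.mul_apply, mul_comm]
      have h2 : P j j * P j j ≤ ∑ k, P j k * P j k :=
        Finset.single_le_sum (f := fun k => P j k * P j k)
          (fun k _ => mul_self_nonneg _) (Finset.mem_univ j)
      rw [hPjj] at h2
      calc s j * s j ≤ ∑ k, P j k * P j k := h2
        _ = s j := h1.symm
    nlinarith [hs0 j]
  rw [hform, strace]
  set t : ℝ := if h : r < n then lamhat ⟨r, h⟩ else 0 with htdef
  set A := Finset.univ.filter (fun j : Fin n => (j : ℕ) < r) with hA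
  set B := Finset.univ.filter (fun j : Fin n => ¬ (j : ℕ) < r) with hB
  have hAB : ∀ g : Fin n → ℝ, ∑ j ∈ A, g j + ∑ j ∈ B, g j = ∑ j, g j := fun g =>
    Finset.sum_filter_add_sum_filter_not _ _ _
  have hcardA : ∑ _j ∈ A, (1 : ℝ) = (r : ℝ) := by
    rw [← sum_castLE hr (fun _ => (1 : ℝ))]; simp
  have htle : ∀ j ∈ A, t ≤ lamhat j := by
    intro j hj
    rw [hA, Finset.mem_filter] at hj
    rw [htdef]
    split_ifs with h
    · exact hlamhat (by rw [Fin.le_def]; exact le_of_lt hj.2)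
    · exact hpos j
  have htge : ∀ j ∈ B, lamhat j ≤ t := by
    intro j hj
    rw [hB, Finset.mem_filter] at hj
    have hrj : r ≤ (j : ℕ) := not_lt.mp hj.2
    have hrn : r < n := lt_of_le_of_lt hrj j.isLt
    rw [htdef, dif_pos hrn]
    exact hlamhat (by rw [Fin.le_def]; exact hrj)
  have step1 : ∑ j ∈ A, (lamhat j * s j - lamhat j) ≤ ∑ j ∈ A, (t * s j - t) := by
    refine Finset.sum_le_sum fun j hj => ?_
    nlinarith [mul_nonneg (sub_nonneg.mpr (htle j hj)) (sub_nonneg.mpr (hs1 j))]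
  have step2 : ∑ j ∈ B, lamhat j * s j ≤ ∑ j ∈ B, t * s j := by
    refine Finset.sum_le_sum fun j hj => ?_
    exact mul_le_mul_of_nonneg_right (htge j hj) (hs0 j)
  have key : ∑ j ∈ A, (t * s j - t) + ∑ j ∈ B, t * s j = 0 := by
    have hconst : ∑ _j ∈ A, t = t * (r : ℝ) := by
      rw [← hcardA, Finset.mul_sum]; simp
    have h1 : ∑ j ∈ A, (t * s j - t) = t * ∑ j ∈ A, s j - t * (r : ℝ) := by
      rw [Finset.sum_sub_distrib, ← Finset.mul_sum, hconst]
    have h2 : ∑ j ∈ B, t * s j = t * ∑ j ∈ B, s j := by rw [Finset.mul_sum]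
    have h3 : ∑ j ∈ A, s j + ∑ j ∈ B, s j = (r : ℝ) := by rw [hAB s, hsum]
    rw [h1, h2]; linear_combination t * h3
  have expand : ∑ j, lamhat j * s j
      = ∑ j ∈ A, (lamhat j * s j - lamhat j) + ∑ j ∈ B, lamhat j * s j
        + ∑ j ∈ A, lamhat j := by
    rw [Finset.sum_sub_distrib, ← hAB (fun j => lamhat j * s j)]; ring
  rw [expand]
  linarith [step1, step2, key]

/-- Sampling-error bound: if `Û_r` consists of orthonormal eigenvectors of `Ĥ` for its `r`
largest eigenvalues, then
`tr(H) − tr(Û_rᵀ H Û_r) ≤ ∑_{j ≥ r} λ_j + 2 r ‖H − Ĥ‖_op`,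
where `λ_1 ≥ … ≥ λ_n` are the eigenvalues of `H`. -/
theorem trace_sampling_error_bound {n r : ℕ} (hr : r ≤ n)
    (H Hhat : Matrix (Fin n) (Fin n) ℝ) (hH : H.PosSemidef) (hHhat : Hhat.PosSemidef)
    (lam lamhat : Fin n → ℝ) (hlam : Antitone lam) (hlamhat : Antitone lamhat)
    (V Vhat : Matrix (Fin n) (Fin n) ℝ)
    (hV : Vᵀ * V = 1) (hHeig : H = V * Matrix.diagonal lam * Vᵀ)
    (hVhat : Vhatᵀ * Vhat = 1) (hHhateig : Hhat = Vhat * Matrix.diagonal lamhat * Vhatᵀ) :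
    H.trace -
        ((Vhat.submatrix id (Fin.castLE hr))ᵀ * H * (Vhat.submatrix id (Fin.castLE hr))).trace
      ≤ (∑ j ∈ Finset.univ.filter (fun j : Fin n => r ≤ (j : ℕ)), lam j)
          + 2 * (r : ℝ) * matOpNorm (H - Hhat) := by
  set Uh := Vhat.submatrix id (Fin.castLE hr) with hUhdef
  set Ur := V.submatrix id (Fin.castLE hr) with hUrdef
  set E := H - Hhat with hEdef
  set c := matOpNorm (H - Hhat) with hcdef
  have hUh : Uhᵀ * Uh = 1 := sub_orthonormal hr Vhat hVhat
  have hUr : Urᵀ * Ur = 1 := sub_orthonormal hr V hV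
  -- positivity of lamhat
  have hpos : ∀ j, 0 ≤ lamhat j := by
    intro j
    rw [lam_eq_quad lamhat Vhat hVhat Hhat hHhateig j]
    have := hHhat.dotProduct_mulVec_nonneg (fun a => Vhat a j)
    simpa using this
  -- traces of conjugations by eigenvector blocks
  have htUhHhat : (Uhᵀ * Hhat * Uh).trace
      = ∑ j ∈ Finset.univ.filter (fun j : Fin n => (j : ℕ) < r), lamhat j := by
    rw [hUhdef, hHhateig, conj_eig hr lamhat Vhat hVhat, Matrix.trace_diagonal]
    exact sum_castLE hr lamhat
  have htUrH : (Urᵀ * H * Ur).trace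
      = ∑ j ∈ Finset.univ.filter (fun j : Fin n => (j : ℕ) < r), lam j := by
    rw [hUrdef, hHeig, conj_eig hr lam V hV, Matrix.trace_diagonal]
    exact sum_castLE hr lam
  -- trace of H
  have htH : H.trace = ∑ j, lam j := by
    rw [hHeig, Matrix.trace_mul_cycle, hV, Matrix.one_mul, Matrix.trace_diagonal]
  -- decomposition of H as Hhat + E
  have hHE : H = Hhat + E := by rw [hEdef]; abel
  have hdecUh : (Uhᵀ * H * Uh).trace = (Uhᵀ * Hhat * Uh).trace + (Uhᵀ * E * Uh).trace := by
    rw [show Uhᵀ * H * Uh = Uhᵀ * Hhat * Uh + Uhᵀ * E * Uh by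
      rw [hHE, Matrix.mul_add, Matrix.add_mul]]
    exact Matrix.trace_add _ _
  have hdecUr : (Urᵀ * Hhat * Ur).trace = (Urᵀ * H * Ur).trace - (Urᵀ * E * Ur).trace := by
    rw [show Urᵀ * Hhat * Ur = Urᵀ * H * Ur - Urᵀ * E * Ur by
      rw [show Hhat = H - E from by rw [hEdef]; abel, Matrix.mul_sub, Matrix.sub_mul]]
    exact Matrix.trace_sub _ _
  -- Ky Fan bound
  have hKF : (Urᵀ * Hhat * Ur).trace
      ≤ ∑ j ∈ Finset.univ.filter (fun j : Fin n => (j : ℕ) < r), lamhat j := by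
    rw [hHhateig]
    exact kyFan hr lamhat hlamhat hpos Vhat hVhat Ur hUr
  -- error bounds
  have he1 : |(Uhᵀ * E * Uh).trace| ≤ r * c := trace_conj_abs_le E Uh hUh
  have he2 : |(Urᵀ * E * Ur).trace| ≤ r * c := trace_conj_abs_le E Ur hUr
  have he1' := abs_le.mp he1
  have he2' := abs_le.mp he2
  -- split total trace
  have hsplit : ∑ j, lam j
      = ∑ j ∈ Finset.univ.filter (fun j : Fin n => (j : ℕ) < r), lam j
        + ∑ j ∈ Finset.univ.filter (fun j : Fin n => r ≤ (j : ℕ)), lam j := by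
    rw [← Finset.sum_filter_add_sum_filter_not Finset.univ (fun j : Fin n => (j : ℕ) < r) lam]
    congr 1
    apply Finset.sum_congr _ fun _ _ => rfl
    apply Finset.filter_congr
    intro j _
    simp [not_lt]
  linarith [hKF, hdecUh, hdecUr, htUhHhat, htUrH, htH, he1'.1, he1'.2, he2'.1, he2'.2, hsplit]
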